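/- On the set of 2×2 complex matrices Z with N(Z) = det Z ≠ 0, the following identity of 4×4 matrices of functions holds: (∂⊗∂)(1/N(Z)) = (2/N(Z))·(Z⁻¹ ⊗ Z⁻¹) − (1/(2N(Z)²))·(e₀⊗e₀ + e₁⊗e₁ + e₂⊗e₂ + e₃⊗e₃), where ∂⊗∂ is the Kronecker product of the operator matrix ∂ = [[∂₁₁,∂₂₁],[∂₁₂,∂₂₂]] with itself (a 4×4 matrix of second-order operators applied to the scalar function 1/N), Z⁻¹⊗Z⁻¹ is the Kronecker product of matrix inverses, and e₀,e₁,e₂,e₃ are the quaternion units realized as [[1,0],[0,1]], [[0,−i],[−i,0]], [[0,−1],[1,0]], [[−i,0],[0,i]]. -/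

import Mathlib

noncomputable section

/-- The space of 2×2 complex matrices, as functions of indices. -/
abbrev M2 : Type := Fin 2 → Fin 2 → ℂ

/-- The elementary matrix with a 1 in position (i,j). -/
def eM (i j : Fin 2) : M2 := fun a b => if a = i ∧ b = j then (1 : ℂ) else 0

/-- The partial derivative ∂/∂z_{ij}. -/
noncomputable def pd (i j : Fin 2) (f : M2 → ℂ) : M2 → ℂ :=
  fun Z => fderiv ℂ f Z (eM i j)

/-- The determinant N(Z) = z₁₁z₂₂ − z₁₂z₂₁. -/
def detM (Z : M2) : ℂ := Z 0 0 * Z 1 1 - Z 0 1 * Z 1 0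

open scoped Kronecker

/-- The quaternion units realized as 2×2 complex matrices. -/
def e0 : Matrix (Fin 2) (Fin 2) ℂ := !![1, 0; 0, 1]
def e1 : Matrix (Fin 2) (Fin 2) ℂ := !![0, -Complex.I; -Complex.I, 0]
def e2 : Matrix (Fin 2) (Fin 2) ℂ := !![0, -1; 1, 0]
def e3 : Matrix (Fin 2) (Fin 2) ℂ := !![-Complex.I, 0; 0, Complex.I]

def ev (a b : Fin 2) : M2 →L[ℂ] ℂ :=
  (ContinuousLinearMap.proj b : (Fin 2 → ℂ) →L[ℂ] ℂ).comp
    (ContinuousLinearMap.proj a : M2 →L[ℂ] (Fin 2 → ℂ))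

@[simp] lemma ev_apply (a b : Fin 2) (Y : M2) : ev a b Y = Y a b := rfl

lemma hasFDerivAt_detM (Y : M2) :
    HasFDerivAt detM
      (Y 0 0 • ev 1 1 + Y 1 1 • ev 0 0 - (Y 0 1 • ev 1 0 + Y 1 0 • ev 0 1)) Y := by
  have := (((ev 0 0).hasFDerivAt (x := Y)).mul ((ev 1 1).hasFDerivAt)).sub
    (((ev 0 1).hasFDerivAt).mul ((ev 1 0).hasFDerivAt))
  have e : detM = fun Y => ev 0 0 Y * ev 1 1 Y - ev 0 1 Y * ev 1 0 Y := by
    funext Y; simp [detM]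
  rw [e]
  exact this

def cof (a b : Fin 2) (Y : M2) : ℂ :=
  (if a = b then 1 else -1) * Y (1 + a) (1 + b)

lemma hasFDerivAt_inv_detM (Y : M2) (h : detM Y ≠ 0) :
    HasFDerivAt (fun Y => (detM Y)⁻¹)
      ((-(ContinuousLinearMap.mulLeftRight ℂ ℂ (detM Y)⁻¹ (detM Y)⁻¹)).comp
        (Y 0 0 • ev 1 1 + Y 1 1 • ev 0 0 - (Y 0 1 • ev 1 0 + Y 1 0 • ev 0 1))) Y :=
  (hasFDerivAt_inv' h).comp Y (hasFDerivAt_detM Y)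

lemma eM_app (i j a b : Fin 2) : eM i j a b = if a = i ∧ b = j then (1:ℂ) else 0 := rfl

lemma pd_inv (l j : Fin 2) (Y : M2) (h : detM Y ≠ 0) :
    pd l j (fun Y => (detM Y)⁻¹) Y = -(cof l j Y) / detM Y ^ 2 := by
  have H := hasFDerivAt_inv_detM Y h
  rw [pd, H.fderiv]
  fin_cases l <;> fin_cases j <;>
    simp [eM_app, cof, div_eq_mul_inv, mul_comm, mul_assoc, mul_inv, sq]

lemma pd_pd (i j k l : Fin 2) (Z : M2) (h : detM Z ≠ 0) :
    pd k i (pd l j (fun Y => (detM Y)⁻¹)) Z =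
      -((if l = j then (1:ℂ) else -1) * (if k = 1 + l ∧ i = 1 + j then 1 else 0))
          / detM Z ^ 2
        + 2 * cof l j Z * cof k i Z / detM Z ^ 3 := by
  classical
  set G : M2 → ℂ := fun Y => -(cof l j Y) * (detM Y * detM Y)⁻¹ with hG
  have hopen : IsOpen {Y : M2 | detM Y ≠ 0} := by
    have : Continuous detM := by unfold detM; fun_prop
    exact isOpen_ne.preimage this
  have heq : pd l j (fun Y => (detM Y)⁻¹) =ᶠ[nhds Z] G := by
    filter_upwards [hopen.mem_nhds h] with Y hY
    rw [pd_inv l j Y hY, hG]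
    simp only [sq]
    ring
  -- derivative of G
  have h2 : detM Z * detM Z ≠ 0 := mul_ne_zero h h
  have hcof : HasFDerivAt (fun Y => cof l j Y)
      ((if l = j then (1:ℂ) else -1) • ev (1+l) (1+j)) Z := by
    exact (((if l = j then (1:ℂ) else -1) • ev (1+l) (1+j))).hasFDerivAt (x := Z)
  have hsq : HasFDerivAt (fun Y => detM Y * detM Y)
      (detM Z • (Z 0 0 • ev 1 1 + Z 1 1 • ev 0 0 - (Z 0 1 • ev 1 0 + Z 1 0 • ev 0 1))
        + detM Z • (Z 0 0 • ev 1 1 + Z 1 1 • ev 0 0 - (Z 0 1 • ev 1 0 + Z 1 0 • ev 0 1))) Z :=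
    (hasFDerivAt_detM Z).mul (hasFDerivAt_detM Z)
  have hinv := (hasFDerivAt_inv' (𝕜 := ℂ) h2).comp Z hsq
  have hGd := (hcof.neg).mul hinv
  have key : fderiv ℂ (pd l j (fun Y => (detM Y)⁻¹)) Z = fderiv ℂ G Z := heq.fderiv_eq
  have hfd : fderiv ℂ G Z = _ := hGd.fderiv
  rw [pd, key, hfd]
  have hDN : (Z 0 0 • ev 1 1 + Z 1 1 • ev 0 0 - (Z 0 1 • ev 1 0 + Z 1 0 • ev 0 1)) (eM k i)
      = cof k i Z := by
    fin_cases k <;> fin_cases i <;>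
      simp [eM_app, cof, ContinuousLinearMap.add_apply, ContinuousLinearMap.sub_apply,
        ContinuousLinearMap.smul_apply, smul_eq_mul]
  have hE : ev (1 + l) (1 + j) (eM k i) = if k = 1 + l ∧ i = 1 + j then (1:ℂ) else 0 := by
    simp [ev_apply, eM_app, eq_comm]
  simp only [ContinuousLinearMap.add_apply, ContinuousLinearMap.smul_apply,
    ContinuousLinearMap.neg_apply, ContinuousLinearMap.comp_apply,
    ContinuousLinearMap.mulLeftRight_apply, Function.comp_apply, smul_eq_mul, hDN, hE, Pi.neg_apply]
  split_ifs <;> field_simp <;> ring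

set_option maxHeartbeats 2000000 in
/-- (∂⊗∂)(1/N) = (2/N)·(Z⁻¹⊗Z⁻¹) − (1/(2N²))·(e₀⊗e₀+e₁⊗e₁+e₂⊗e₂+e₃⊗e₃) on
{N ≠ 0}.  The ((i,j),(k,l)) entry of ∂⊗∂ is the composition of the (i,k) entry of ∂ (namely
∂_{k+1,i+1} = pd k i) with its (j,l) entry (namely pd l j). -/
theorem stmt10 (Z : M2) (h : detM Z ≠ 0) (i j k l : Fin 2) :
    pd k i (pd l j (fun Y => (detM Y)⁻¹)) Z =
      2 / detM Z * ((Matrix.of Z)⁻¹ i k * (Matrix.of Z)⁻¹ j l) -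
        1 / (2 * detM Z ^ 2) *
          (e0 ⊗ₖ e0 + e1 ⊗ₖ e1 + e2 ⊗ₖ e2 + e3 ⊗ₖ e3) (i, j) (k, l) := by
  rw [pd_pd i j k l Z h]
  have hd : (Matrix.of Z).det = detM Z := by
    simp [Matrix.det_fin_two, detM]
  rw [Matrix.inv_def, Matrix.adjugate_fin_two, hd, Ring.inverse_eq_inv']
  fin_cases i <;> fin_cases j <;> fin_cases k <;> fin_cases l <;>
    · simp only [cof, e0, e1, e2, e3, Matrix.kroneckerMap_apply, Matrix.add_apply,
        Matrix.smul_apply, smul_eq_mul, Matrix.cons_val', Matrix.cons_val_zero,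
        Matrix.cons_val_one, Matrix.head_cons, Matrix.head_fin_const, Matrix.empty_val',
        Matrix.cons_val_fin_one, Fin.isValue, Fin.zero_eta, Fin.mk_one,
        show (1 + 1 : Fin 2) = 0 from rfl, show (1 + 0 : Fin 2) = 1 from rfl]
      norm_num [Complex.I_mul_I, show (2:Fin 2) = 0 from rfl, Fin.ext_iff]
      field_simp
      all_goals ring
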